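/- Let α_i, α_j, α_k be real numbers with α_i > α_j > α_k, and let T, T_i, T_j, T_k, T_{ij}, T_{ik}, T_{jk}, T_{ijk} be positive reals satisfying the Hirota bilinear relation (α_i−α_k)·T_j·T_{ik} = (α_i−α_j)·T_k·T_{ij} + (α_j−α_k)·T_i·T_{jk}. Define a = (α_i−α_j)·T_{ij}·T/(T_i·T_j), b = (α_i−α_k)·T_{ijk}·T_j/(T_{ij}·T_{jk}), c = (α_j−α_k)·T_{jk}·T/(T_j·T_k), and a′ = (α_j−α_k)·T_{ijk}·T_i/(T_{ij}·T_{ik}), b′ = (α_i−α_k)·T_{ik}·T/(T_i·T_k), c′ = (α_i−α_j)·T_{ijk}·T_k/(T_{ik}·T_{jk}). Then a′ = b·c/(a+c), b′ = a+c, and c′ = a·b/(a+c). In other words, the enriched Yang–Baxter move on chamber variables induces the Lusztig Yang–Baxter move (a,b,c) ↦ (bc/(a+c), a+c, ab/(a+c)) on the vertex variables. -/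

import Mathlib

/-- The enriched Yang–Baxter move on chamber variables induces the Lusztig
Yang–Baxter move `(a,b,c) ↦ (bc/(a+c), a+c, ab/(a+c))` on the vertex variables. -/
theorem stmt_5 (αi αj αk : ℝ) (hij : αj < αi) (hjk : αk < αj)
    (T Ti Tj Tk Tij Tik Tjk Tijk : ℝ)
    (hT : 0 < T) (hTi : 0 < Ti) (hTj : 0 < Tj) (hTk : 0 < Tk)
    (hTij : 0 < Tij) (hTik : 0 < Tik) (hTjk : 0 < Tjk) (hTijk : 0 < Tijk)
    (hHirota : (αi - αk) * Tj * Tik = (αi - αj) * Tk * Tij + (αj - αk) * Ti * Tjk)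
    (a b c a' b' c' : ℝ)
    (ha : a = (αi - αj) * Tij * T / (Ti * Tj))
    (hb : b = (αi - αk) * Tijk * Tj / (Tij * Tjk))
    (hc : c = (αj - αk) * Tjk * T / (Tj * Tk))
    (ha' : a' = (αj - αk) * Tijk * Ti / (Tij * Tik))
    (hb' : b' = (αi - αk) * Tik * T / (Ti * Tk))
    (hc' : c' = (αi - αj) * Tijk * Tk / (Tik * Tjk)) :
    a' = b * c / (a + c) ∧ b' = a + c ∧ c' = a * b / (a + c) := by
  have hij' : 0 < αi - αj := sub_pos.2 hij
  have hjk' : 0 < αj - αk := sub_pos.2 hjk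
  have h1 : 0 < a := ha ▸ div_pos (mul_pos (mul_pos hij' hTij) hT) (mul_pos hTi hTj)
  have h2 : 0 < c := hc ▸ div_pos (mul_pos (mul_pos hjk' hTjk) hT) (mul_pos hTj hTk)
  have hik' : 0 < αi - αk := by linarith
  have hac : a + c ≠ 0 := by positivity
  have hsum : a + c = b' := by
    rw [ha, hb', hc]
    field_simp
    linear_combination (-1 : ℝ) * hHirota
  refine ⟨?_, hsum.symm, ?_⟩
  · rw [hsum, ha', hb, hc, hb']
    field_simp
  · rw [hsum, hc', ha, hb, hb']
    field_simp
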